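/- Let a : [-M,M] → ℝ be Lipschitz continuous with Lipschitz constant Lip(a) and satisfy a(ξ) ≥ 1/K for all ξ ∈ [-M,M]. Then: (1) for every φ ∈ X there exists exactly one number r(φ) ∈ (0,K] with ∫_{-r(φ)}^{0} a(φ(s)) ds = 1; and (2) the resulting map r : X → (0,K] is Lipschitz continuous with respect to the sup norm, with Lipschitz constant at most K²·Lip(a), i.e. |r(φ) − r(ψ)| ≤ K²·Lip(a)·‖φ − ψ‖ for all φ, ψ ∈ X. -/

import Mathlib

open Set

/-- Membership in the phase space `X`: continuous functions on `[-K,0]` with sup norm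
less than `M` and Lipschitz constant at most `L₀`. -/
def memX (K M L₀ : ℝ) (φ : ℝ → ℝ) : Prop :=
  ContinuousOn φ (Set.Icc (-K) 0) ∧ (∀ s ∈ Set.Icc (-K) 0, |φ s| < M) ∧
    ∀ s ∈ Set.Icc (-K) 0, ∀ t ∈ Set.Icc (-K) 0, |φ s - φ t| ≤ L₀ * |s - t|

private lemma aux_cont (K M La : ℝ) (hLa : 0 ≤ La) (a φ : ℝ → ℝ)
    (ha_lip : ∀ x ∈ Icc (-M) M, ∀ y ∈ Icc (-M) M, |a x - a y| ≤ La * |x - y|)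
    (hφc : ContinuousOn φ (Icc (-K) 0)) (hφb : ∀ s ∈ Icc (-K) 0, |φ s| < M) :
    ContinuousOn (fun s => a (φ s)) (Icc (-K) 0) := by
  have haC : ContinuousOn a (Icc (-M) M) := by
    have : LipschitzOnWith (Real.toNNReal La) a (Icc (-M) M) := by
      apply LipschitzOnWith.of_dist_le_mul
      intro x hx y hy
      simpa [Real.dist_eq, Real.coe_toNNReal La hLa] using ha_lip x hx y hy
    exact this.continuousOn
  exact haC.comp hφc fun s hs => abs_le.mp (le_of_lt (hφb s hs))

private lemma aux_int (K M La : ℝ) (hLa : 0 ≤ La) (a φ : ℝ → ℝ)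
    (ha_lip : ∀ x ∈ Icc (-M) M, ∀ y ∈ Icc (-M) M, |a x - a y| ≤ La * |x - y|)
    (hφc : ContinuousOn φ (Icc (-K) 0)) (hφb : ∀ s ∈ Icc (-K) 0, |φ s| < M)
    (x y : ℝ) (hx : -K ≤ x) (hxy : x ≤ y) (hy : y ≤ 0) :
    IntervalIntegrable (fun s => a (φ s)) MeasureTheory.volume x y := by
  apply ContinuousOn.intervalIntegrable
  apply (aux_cont K M La hLa a φ ha_lip hφc hφb).mono
  rw [uIcc_of_le hxy]
  exact Icc_subset_Icc hx hy

/-- The threshold delay `r(φ)`, defined by `∫_{-r(φ)}^0 a(φ(s)) ds = 1`, is well defined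
on the phase space, takes values in `(0,K]`, and is Lipschitz continuous with constant
at most `K² · Lip(a)` with respect to the sup norm. -/
theorem threshold_delay_well_defined_and_lipschitz
    (K M L₀ La : ℝ) (hK : 0 < K) (hM : 0 < M) (hL₀ : 0 < L₀)
    (a : ℝ → ℝ)
    (ha_lip : ∀ x ∈ Icc (-M) M, ∀ y ∈ Icc (-M) M, |a x - a y| ≤ La * |x - y|)
    (ha_lb : ∀ ξ ∈ Icc (-M) M, 1 / K ≤ a ξ) :
    (∀ φ : ℝ → ℝ, memX K M L₀ φ →
      ∃! r : ℝ, r ∈ Ioc 0 K ∧ (∫ s in (-r)..0, a (φ s)) = 1) ∧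
    (∀ φ ψ : ℝ → ℝ, memX K M L₀ φ → memX K M L₀ ψ →
      ∀ rφ rψ : ℝ,
        rφ ∈ Ioc 0 K → (∫ s in (-rφ)..0, a (φ s)) = 1 →
        rψ ∈ Ioc 0 K → (∫ s in (-rψ)..0, a (ψ s)) = 1 →
        |rφ - rψ| ≤ K ^ 2 * La * ⨆ s : Icc (-K) (0 : ℝ), |φ (s : ℝ) - ψ (s : ℝ)|) := by
  have hLa : 0 ≤ La := by
    by_contra h
    push_neg at h
    have h0 : (0:ℝ) ∈ Icc (-M) M := ⟨by linarith, le_of_lt hM⟩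
    have hMm : M ∈ Icc (-M) M := ⟨by linarith, le_refl M⟩
    have := ha_lip 0 h0 M hMm
    have h2 : |(0:ℝ) - M| = M := by rw [zero_sub, abs_neg, abs_of_pos hM]
    rw [h2] at this
    nlinarith [abs_nonneg (a 0 - a M)]
  -- upper bound for a on [-M, M]
  set Ca : ℝ := a 0 + La * M with hCa
  have ha_ub : ∀ ξ ∈ Icc (-M) M, a ξ ≤ Ca := by
    intro ξ hξ
    have h0 : (0:ℝ) ∈ Icc (-M) M := ⟨by linarith, le_of_lt hM⟩
    have := ha_lip ξ hξ 0 h0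
    have hb : |ξ - 0| ≤ M := by
      rw [sub_zero]; exact abs_le.mpr hξ
    have := abs_le.mp ((le_trans this (by nlinarith [abs_nonneg (ξ - 0)])) : |a ξ - a 0| ≤ La * M)
    linarith [this.2]
  -- lower bound on integrals
  have hlow : ∀ φ : ℝ → ℝ, memX K M L₀ φ → ∀ x y : ℝ, -K ≤ x → x ≤ y → y ≤ 0 →
      (y - x) / K ≤ ∫ s in x..y, a (φ s) := by
    intro φ hφ x y hx hxy hy
    have hconst : (∫ s in x..y, (1/K : ℝ)) = (y - x) * (1/K) := by
      rw [intervalIntegral.integral_const, smul_eq_mul]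
    have hmono := intervalIntegral.integral_mono_on hxy
      (intervalIntegrable_const)
      (aux_int K M La hLa a φ ha_lip hφ.1 hφ.2.1 x y hx hxy hy)
      (fun s hs => ha_lb (φ s) (abs_le.mp (le_of_lt (hφ.2.1 s ⟨le_trans hx hs.1, le_trans hs.2 hy⟩))))
    rw [hconst] at hmono
    calc (y - x) / K = (y - x) * (1/K) := by ring
    _ ≤ _ := hmono
  -- upper bound on integrals
  have hup : ∀ φ : ℝ → ℝ, memX K M L₀ φ → ∀ x y : ℝ, -K ≤ x → x ≤ y → y ≤ 0 →
      (∫ s in x..y, a (φ s)) ≤ (y - x) * Ca := by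
    intro φ hφ x y hx hxy hy
    have hconst : (∫ s in x..y, (Ca : ℝ)) = (y - x) * Ca := by
      rw [intervalIntegral.integral_const, smul_eq_mul]
    have hmono := intervalIntegral.integral_mono_on hxy
      (aux_int K M La hLa a φ ha_lip hφ.1 hφ.2.1 x y hx hxy hy)
      (intervalIntegrable_const)
      (fun s hs => ha_ub (φ s) (abs_le.mp (le_of_lt (hφ.2.1 s ⟨le_trans hx hs.1, le_trans hs.2 hy⟩))))
    rw [hconst] at hmono
    exact hmono
  -- additivity
  have hadd : ∀ φ : ℝ → ℝ, memX K M L₀ φ → ∀ r1 r2 : ℝ, 0 ≤ r1 → r1 ≤ r2 → r2 ≤ K →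
      (∫ s in (-r2)..(-r1), a (φ s)) + (∫ s in (-r1)..0, a (φ s)) = ∫ s in (-r2)..0, a (φ s) := by
    intro φ hφ r1 r2 h1 h12 h2
    exact intervalIntegral.integral_add_adjacent_intervals
      (aux_int K M La hLa a φ ha_lip hφ.1 hφ.2.1 (-r2) (-r1) (by linarith) (by linarith) (by linarith))
      (aux_int K M La hLa a φ ha_lip hφ.1 hφ.2.1 (-r1) 0 (by linarith) (by linarith) (by linarith))
  constructor
  · -- existence and uniqueness
    intro φ hφ
    set F : ℝ → ℝ := fun r => ∫ s in (-r)..0, a (φ s) with hF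
    have hF0 : F 0 = 0 := by simp [hF]
    have hFK : 1 ≤ F K := by
      have := hlow φ hφ (-K) 0 (le_refl _) (by linarith) (le_refl _)
      have hd : (0 - (-K)) / K = 1 := by field_simp; ring
      rw [hd] at this
      exact this
    -- F Lipschitz on [0,K]
    have hFdiff : ∀ r1 r2 : ℝ, 0 ≤ r1 → r1 ≤ r2 → r2 ≤ K →
        (r2 - r1) / K ≤ F r2 - F r1 ∧ F r2 - F r1 ≤ (r2 - r1) * Ca := by
      intro r1 r2 h1 h12 h2
      have hA := hadd φ hφ r1 r2 h1 h12 h2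
      have hl := hlow φ hφ (-r2) (-r1) (by linarith) (by linarith) (by linarith)
      have hu := hup φ hφ (-r2) (-r1) (by linarith) (by linarith) (by linarith)
      constructor
      · calc (r2 - r1) / K = (-r1 - -r2) / K := by ring_nf
        _ ≤ ∫ s in (-r2)..(-r1), a (φ s) := hl
        _ = F r2 - F r1 := by rw [hF]; linarith [hA]
      · calc F r2 - F r1 = ∫ s in (-r2)..(-r1), a (φ s) := by rw [hF]; linarith [hA]
        _ ≤ (-r1 - -r2) * Ca := hu
        _ = (r2 - r1) * Ca := by ring
    have hCa0 : 0 ≤ Ca := by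
      have h0 : (0:ℝ) ∈ Icc (-M) M := ⟨by linarith, le_of_lt hM⟩
      have := ha_lb 0 h0
      have := ha_ub 0 h0
      have : (0:ℝ) < 1 / K := by positivity
      linarith [ha_lb 0 h0, ha_ub 0 h0]
    have hFcont : ContinuousOn F (Icc 0 K) := by
      have : LipschitzOnWith (Real.toNNReal Ca) F (Icc 0 K) := by
        apply LipschitzOnWith.of_dist_le_mul
        intro x hx y hy
        rw [Real.dist_eq, Real.dist_eq, Real.coe_toNNReal Ca hCa0]
        rcases le_total x y with h | h
        · have := (hFdiff x y hx.1 h hy.2).2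
          have h1 := (hFdiff x y hx.1 h hy.2).1
          have hnn : 0 ≤ F y - F x := le_trans (div_nonneg (by linarith) hK.le) h1
          rw [abs_of_nonpos (by linarith : F x - F y ≤ 0), abs_of_nonpos (by linarith : x - y ≤ 0)]
          nlinarith
        · have := (hFdiff y x hy.1 h hx.2).2
          have h1 := (hFdiff y x hy.1 h hx.2).1
          have hnn : 0 ≤ F x - F y := le_trans (div_nonneg (by linarith) hK.le) h1
          rw [abs_of_nonneg hnn, abs_of_nonneg (by linarith : 0 ≤ x - y)]
          nlinarith
      exact this.continuousOn
    have hIVT := intermediate_value_Icc (le_of_lt hK) hFcont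
    have h1mem : (1:ℝ) ∈ Icc (F 0) (F K) := ⟨by rw [hF0]; norm_num, hFK⟩
    obtain ⟨r, hrmem, hr⟩ := hIVT h1mem
    have hr0 : 0 < r := by
      rcases lt_or_eq_of_le hrmem.1 with h | h
      · exact h
      · exfalso; rw [← h] at hr; rw [hF0] at hr; norm_num at hr
    refine ⟨r, ⟨⟨hr0, hrmem.2⟩, hr⟩, ?_⟩
    intro y hy
    -- uniqueness
    have key : ∀ r1 r2 : ℝ, r1 ∈ Ioc 0 K → r2 ∈ Ioc 0 K → F r1 = 1 → F r2 = 1 → r1 ≤ r2 → r2 ≤ r1 := by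
      intro r1 r2 h1 h2 e1 e2 h12
      have := (hFdiff r1 r2 (le_of_lt h1.1) h12 h2.2).1
      rw [e1, e2] at this
      have h3 : (r2 - r1) / K ≤ 0 := by linarith
      have h5 := mul_le_mul_of_nonneg_right h3 hK.le
      rw [div_mul_cancel₀ _ hK.ne'] at h5
      linarith
    rcases le_total y r with h | h
    · exact le_antisymm h (key y r hy.1 ⟨hr0, hrmem.2⟩ hy.2 hr h)
    · exact le_antisymm (key r y ⟨hr0, hrmem.2⟩ hy.1 hr hy.2 h) h
  · -- Lipschitz estimate
    intro φ ψ hφ hψ rφ rψ hrφ hφ1 hrψ hψ1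
    set S : ℝ := ⨆ s : Icc (-K) (0 : ℝ), |φ (s : ℝ) - ψ (s : ℝ)| with hS
    have hne : Nonempty (Icc (-K) (0:ℝ)) := ⟨⟨0, by constructor <;> linarith⟩⟩
    have hbdd : BddAbove (range fun s : Icc (-K) (0:ℝ) => |φ (s:ℝ) - ψ (s:ℝ)|) := by
      refine ⟨2 * M, ?_⟩
      rintro x ⟨s, rfl⟩
      have h1 := hφ.2.1 s s.2
      have h2 := hψ.2.1 s s.2
      calc |φ (s:ℝ) - ψ (s:ℝ)| ≤ |φ (s:ℝ)| + |ψ (s:ℝ)| := abs_sub _ _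
      _ ≤ 2 * M := by linarith
    have hSle : ∀ s ∈ Icc (-K) (0:ℝ), |φ s - ψ s| ≤ S :=
      fun s hs => le_ciSup hbdd (⟨s, hs⟩ : Icc (-K) (0:ℝ))
    have hS0 : 0 ≤ S := le_trans (abs_nonneg _) (hSle 0 ⟨by linarith, le_refl 0⟩)
    -- key one-sided estimate
    have key : ∀ (φ' ψ' : ℝ → ℝ), memX K M L₀ φ' → memX K M L₀ ψ' →
        ∀ r1 r2 : ℝ, r1 ∈ Ioc 0 K → (∫ s in (-r1)..0, a (φ' s)) = 1 →
        r2 ∈ Ioc 0 K → (∫ s in (-r2)..0, a (ψ' s)) = 1 →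
        (∀ s ∈ Icc (-K) (0:ℝ), |φ' s - ψ' s| ≤ S) →
        r2 ≤ r1 → r1 - r2 ≤ K ^ 2 * La * S := by
      intro φ' ψ' hφ' hψ' r1 r2 h1 e1 h2 e2 hle h21
      have hA := hadd φ' hφ' r2 r1 (le_of_lt h2.1) h21 h1.2
      -- ∫_{-r1}^{-r2} a(φ') = ∫_{-r2}^0 (a ψ' - a φ')
      have hintφ := aux_int K M La hLa a φ' ha_lip hφ'.1 hφ'.2.1 (-r2) 0 (by linarith [h2.2]) (by linarith [h2.1]) (le_refl 0)
      have hintψ := aux_int K M La hLa a ψ' ha_lip hψ'.1 hψ'.2.1 (-r2) 0 (by linarith [h2.2]) (by linarith [h2.1]) (le_refl 0)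
      have hkey : (∫ s in (-r1)..(-r2), a (φ' s)) = ∫ s in (-r2)..0, (a (ψ' s) - a (φ' s)) := by
        rw [intervalIntegral.integral_sub hintψ hintφ, e2]
        linarith [hA, e1]
      -- pointwise bound on the integrand
      have hptw : ∀ s ∈ Icc (-r2) (0:ℝ), a (ψ' s) - a (φ' s) ≤ La * S := by
        intro s hs
        have hsK : s ∈ Icc (-K) (0:ℝ) := ⟨by linarith [hs.1, h2.2], hs.2⟩
        have hmφ : φ' s ∈ Icc (-M) M := abs_le.mp (le_of_lt (hφ'.2.1 s hsK))
        have hmψ : ψ' s ∈ Icc (-M) M := abs_le.mp (le_of_lt (hψ'.2.1 s hsK))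
        have := ha_lip (ψ' s) hmψ (φ' s) hmφ
        have habs : |ψ' s - φ' s| ≤ S := by rw [abs_sub_comm]; exact hle s hsK
        calc a (ψ' s) - a (φ' s) ≤ |a (ψ' s) - a (φ' s)| := le_abs_self _
        _ ≤ La * |ψ' s - φ' s| := this
        _ ≤ La * S := by nlinarith [abs_nonneg (ψ' s - φ' s)]
      have hub2 : (∫ s in (-r2)..0, (a (ψ' s) - a (φ' s))) ≤ r2 * (La * S) := by
        have hconst : (∫ s in (-r2)..(0:ℝ), (La * S : ℝ)) = (0 - (-r2)) * (La * S) := by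
          rw [intervalIntegral.integral_const, smul_eq_mul]
        have := intervalIntegral.integral_mono_on (by linarith [h2.1] : (-r2:ℝ) ≤ 0)
          (hintψ.sub hintφ) intervalIntegrable_const hptw
        rw [hconst] at this
        calc (∫ s in (-r2)..0, (a (ψ' s) - a (φ' s))) ≤ (0 - (-r2)) * (La * S) := this
        _ = r2 * (La * S) := by ring
      have hlb2 := hlow φ' hφ' (-r1) (-r2) (by linarith [h1.2]) (by linarith) (by linarith [h2.1])
      rw [hkey] at hlb2
      have : (-r2 - -r1) / K ≤ r2 * (La * S) := le_trans hlb2 hub2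
      have hr2K : r2 ≤ K := h2.2
      have hLaS : 0 ≤ La * S := mul_nonneg hLa hS0
      have : (r1 - r2) / K ≤ K * (La * S) := by
        calc (r1 - r2) / K = (-r2 - -r1) / K := by ring_nf
        _ ≤ r2 * (La * S) := this
        _ ≤ K * (La * S) := by nlinarith
      calc r1 - r2 = ((r1 - r2) / K) * K := by field_simp
      _ ≤ (K * (La * S)) * K := by nlinarith [this]
      _ = K ^ 2 * La * S := by ring
    have hSsym : S = ⨆ s : Icc (-K) (0 : ℝ), |ψ (s : ℝ) - φ (s : ℝ)| := by
      rw [hS]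
      congr 1
      funext s
      rw [abs_sub_comm]
    rcases le_total rψ rφ with h | h
    · rw [abs_of_nonneg (by linarith : 0 ≤ rφ - rψ)]
      exact key φ ψ hφ hψ rφ rψ hrφ hφ1 hrψ hψ1 hSle h
    · rw [abs_of_nonpos (by linarith : rφ - rψ ≤ 0)]
      have := key ψ φ hψ hφ rψ rφ hrψ hψ1 hrφ hφ1
        (fun s hs => by rw [abs_sub_comm]; exact hSle s hs) h
      linarith
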